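/- Moment-preservation of the IMEX-BDF-DG scheme: if the initial data satisfy ⟨g_h^k⟩_h = 0 for k = 0, 1, ..., s−1, then the numerical solutions of the IMEX-BDF-DG scheme with any of the three IMEX partitionings satisfy ⟨g_h^n⟩_h = 0 for all n ≥ s. -/
import Mathlib


open Finset

/-- Moment preservation of the IMEX-BDF-DG scheme: if the initialization satisfies
`⟨g_h^k⟩_h = 0` for `k = 0, …, s−1`, then `⟨g_h^n⟩_h = 0` for all `n ≥ s`.
The micro update is written in a form covering all three IMEX partitionings: the
implicit scalar `lam = 1 + Δt c_s σ_s/ε² (+ Δt c_s σ_a)`, transport coefficients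
`d1 k = Δt b_k/ε`, explicit/implicit `ρ`-gradient coefficients `β, γ` (acting on the
data `r n = 𝒟_h^- ρ_h^n`), and explicit absorption coefficients `dex`. -/
theorem stmt_8 {Vsp : Type*} [AddCommGroup Vsp] [Module ℝ Vsp]
    (Nv s : ℕ) [NeZero Nv] (hs : 1 ≤ s)
    (ω v : Fin Nv → ℝ) (hω : ∀ q, 0 < ω q) (hω1 : ∑ q, ω q = 1)
    (hv : ∑ q, ω q * v q = 0)
    (a d1 β dex : Fin s → ℝ) (γ lam : ℝ) (hlam : lam ≠ 0)
    (Dup : Fin Nv → (Fin Nv → Vsp) → Vsp)   -- upwind DG transport at node v_q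
    (r : ℕ → Vsp)                            -- 𝒟_h^- ρ_h^n data
    (g : ℕ → Fin Nv → Vsp)
    (hrec : ∀ n : ℕ, ∀ q : Fin Nv,
      lam • g (n + s) q
        = (∑ k : Fin s, a k • g (n + (k : ℕ)) q)
          - (∑ k : Fin s, d1 k •
              (Dup q (g (n + (k : ℕ))) - ∑ q', ω q' • Dup q' (g (n + (k : ℕ)))))
          - (∑ k : Fin s, β k • ((v q) • r (n + (k : ℕ))))
          - γ • ((v q) • r (n + s))
          - ∑ k : Fin s, dex k • g (n + (k : ℕ)) q)
    (hinit : ∀ k < s, (∑ q, ω q • g k q) = (0 : Vsp)) :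
    ∀ n, s ≤ n → (∑ q, ω q • g n q) = (0 : Vsp) := by
  suffices h : ∀ n, (∑ q, ω q • g n q) = (0 : Vsp) by
    intro n _; exact h n
  intro n
  induction n using Nat.strong_induction_on with
  | _ n ih =>
    by_cases hn : n < s
    · exact hinit n hn
    · obtain ⟨m, rfl⟩ : ∃ m, n = m + s := ⟨n - s, by omega⟩
      have hA : ∀ k : Fin s, (∑ q, ω q • g (m + (k : ℕ)) q) = (0 : Vsp) :=
        fun k => ih _ (by have := k.2; omega)
      have hvr : ∀ x : Vsp, (∑ q, ω q • ((v q) • x)) = (0 : Vsp) := by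
        intro x
        have h1 : (∑ q, ω q • ((v q) • x)) = (∑ q, ω q * v q) • x := by
          rw [Finset.sum_smul]
          exact Finset.sum_congr rfl fun q _ => smul_smul _ _ _
        rw [h1, hv, zero_smul]
      have hD : ∀ G : Fin Nv → Vsp,
          (∑ q, ω q • (Dup q G - ∑ q', ω q' • Dup q' G)) = (0 : Vsp) := by
        intro G
        simp_rw [smul_sub, Finset.sum_sub_distrib]
        rw [← Finset.sum_smul, hω1, one_smul, sub_self]
      have key : lam • (∑ q, ω q • g (m + s) q) = 0 := by
        rw [Finset.smul_sum]
        calc (∑ q, lam • ω q • g (m + s) q)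
            = ∑ q, ω q • (lam • g (m + s) q) :=
              Finset.sum_congr rfl fun q _ => (smul_comm _ _ _)
          _ = 0 := by
              have e1 : (∑ q, ω q • (∑ k : Fin s, a k • g (m + (k : ℕ)) q)) = 0 := by
                simp_rw [Finset.smul_sum]
                rw [Finset.sum_comm]
                refine Finset.sum_eq_zero fun k _ => ?_
                simp_rw [smul_comm (ω _) (a k)]
                rw [← Finset.smul_sum, hA, smul_zero]
              have e2 : (∑ q, ω q • (∑ k : Fin s, d1 k •
                  (Dup q (g (m + (k : ℕ))) - ∑ q', ω q' • Dup q' (g (m + (k : ℕ)))))) = 0 := by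
                simp_rw [Finset.smul_sum]
                rw [Finset.sum_comm]
                refine Finset.sum_eq_zero fun k _ => ?_
                simp_rw [smul_comm (ω _) (d1 k)]
                rw [← Finset.smul_sum, hD, smul_zero]
              have e3 : (∑ q, ω q • (∑ k : Fin s, β k • ((v q) • r (m + (k : ℕ))))) = 0 := by
                simp_rw [Finset.smul_sum]
                rw [Finset.sum_comm]
                refine Finset.sum_eq_zero fun k _ => ?_
                simp_rw [smul_comm (ω _) (β k)]
                rw [← Finset.smul_sum, hvr, smul_zero]
              have e4 : (∑ q, ω q • (γ • ((v q) • r (m + s)))) = 0 := by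
                simp_rw [smul_comm (ω _) γ]
                rw [← Finset.smul_sum, hvr, smul_zero]
              have e5 : (∑ q, ω q • (∑ k : Fin s, dex k • g (m + (k : ℕ)) q)) = 0 := by
                simp_rw [Finset.smul_sum]
                rw [Finset.sum_comm]
                refine Finset.sum_eq_zero fun k _ => ?_
                simp_rw [smul_comm (ω _) (dex k)]
                rw [← Finset.smul_sum, hA, smul_zero]
              have fix : ∀ q : Fin Nv,
                  ((∑ k : Fin s, d1 k • Dup q (g (m + (k : ℕ)))) -
                   ∑ k : Fin s, d1 k • ∑ q', ω q' • Dup q' (g (m + (k : ℕ))))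
                  = ∑ k : Fin s, d1 k •
                      (Dup q (g (m + (k : ℕ))) - ∑ q', ω q' • Dup q' (g (m + (k : ℕ)))) := by
                intro q
                rw [← Finset.sum_sub_distrib]
                exact Finset.sum_congr rfl fun k _ => (smul_sub _ _ _).symm
              simp_rw [hrec, smul_sub, Finset.sum_sub_distrib, fix]
              rw [e1, e2, e3, e4, e5]
              simp
      exact (smul_eq_zero.mp key).resolve_left hlam
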